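/- Let p ≥ 5, f ≥ 2, and let λ, λ' ∈ RD(x) (defined by conditions (i)-(iii) in the context). Suppose there exists j ∈ {0,...,f-1} such that S_λ ∩ ({0,...,f-1}\{j-1, j}) = S_{λ'} ∩ ({0,...,f-1}\{j-1, j}) (indices taken mod f). Then λ_i(x_i) = λ'_i(x_i) for every i ∉ {j-2, j-1, j} (indices mod f). -/

import Mathlib

/-- Encode an affine function `a·x + b` as `(a, b) : ℤ × ℤ`; the four possibilities
`x_i, x_i+1, p-2-x_i, p-3-x_i` are `(1,0), (1,1), (-1,p-2), (-1,p-3)`.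
`RDTuple p l` says `l ∈ RD(x_0,…,x_{f-1})` (cyclic conventions, `i+1` in `Fin f`). -/
def RDTuple (p : ℤ) {f : ℕ} [NeZero f] (l : Fin f → ℤ × ℤ) : Prop :=
  (∀ i : Fin f, l i = (1, 0) ∨ l i = (1, 1) ∨ l i = (-1, p - 2) ∨ l i = (-1, p - 3)) ∧
  (∀ i : Fin f, (l i = (1, 0) ∨ l i = (1, 1)) →
      (l (i + 1) = (1, 0) ∨ l (i + 1) = (-1, p - 2))) ∧
  (∀ i : Fin f, (l i = (-1, p - 2) ∨ l i = (-1, p - 3)) →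
      (l (i + 1) = (-1, p - 3) ∨ l (i + 1) = (1, 1)))

/-- `S_λ = {i : λ_i(x_i) ∈ {p-3-x_i, x_i+1}}`. -/
def SLambda (p : ℤ) {f : ℕ} (l : Fin f → ℤ × ℤ) : Set (Fin f) :=
  {i | l i = (-1, p - 3) ∨ l i = (1, 1)}

/-- The slope of `λ_i` is `-1` iff `i+1 ∈ S_λ`. -/
lemma slope_iff_succ_mem (p : ℤ) {f : ℕ} [NeZero f] (hp : 5 ≤ p)
    {l : Fin f → ℤ × ℤ} (hl : RDTuple p l) (i : Fin f) :
    (l (i + 1) = (-1, p - 3) ∨ l (i + 1) = (1, 1)) ↔ (l i).1 = -1 := by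
  obtain ⟨h1, h2, h3⟩ := hl
  rcases h1 i with ha | ha | ha | ha
  · rcases h2 i (Or.inl ha) with hb | hb <;>
      simp [ha, hb, Prod.mk.injEq] <;> omega
  · rcases h2 i (Or.inr ha) with hb | hb <;>
      simp [ha, hb, Prod.mk.injEq] <;> omega
  · rcases h3 i (Or.inl ha) with hb | hb <;>
      simp [ha, hb, Prod.mk.injEq] <;> omega
  · rcases h3 i (Or.inr ha) with hb | hb <;>
      simp [ha, hb, Prod.mk.injEq] <;> omega

/-- If `λ, λ' ∈ RD(x)` and `S_λ`, `S_{λ'}` agree outside `{j-1, j}` (indices mod `f`),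
then `λ_i = λ'_i` for every `i ∉ {j-2, j-1, j}`. -/
theorem stmt13 (p : ℤ) (f : ℕ) [NeZero f] (hp : 5 ≤ p) (hf : 2 ≤ f)
    (l l' : Fin f → ℤ × ℤ) (hl : RDTuple p l) (hl' : RDTuple p l') (j : Fin f)
    (hS : ∀ i : Fin f, i ≠ j - 1 → i ≠ j →
        (i ∈ SLambda p l ↔ i ∈ SLambda p l')) :
    ∀ i : Fin f, i ≠ j - 2 → i ≠ j - 1 → i ≠ j → l i = l' i := by
  intro i hi2 hi1 hi0
  have hj1 : i + 1 ≠ j - 1 := by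
    intro h
    apply hi2
    have : i = j - 1 - 1 := by rw [← h]; open Fin.CommRing in ring
    rw [this]; open Fin.CommRing in ring
  have hj0 : i + 1 ≠ j := by
    intro h
    apply hi1
    rw [← h]; open Fin.CommRing in ring
  have Hi := hS i hi1 hi0
  have Hi1 := hS (i + 1) hj1 hj0
  simp only [SLambda, Set.mem_setOf_eq] at Hi Hi1
  have Hslope : (l i).1 = -1 ↔ (l' i).1 = -1 :=
    (slope_iff_succ_mem p hp hl i).symm.trans
      (Hi1.trans (slope_iff_succ_mem p hp hl' i))
  rcases hl.1 i with ha | ha | ha | ha <;> rcases hl'.1 i with hb | hb | hb | hb <;>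
    simp [ha, hb, Prod.mk.injEq] at Hi Hslope ⊢ <;> omega
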